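/- The number of nonzero coordinates of Ψ(x) is exactly ∑_{k=0}^{d-1} C(m,k) C(d-1,k) for every x ∈ [0,1)^d; in particular it is O((log(1/ε))^{d-1}) for ε = 2^{-m}. -/

import Mathlib

open MeasureTheory Finset

/-- The dyadic box in `[0,1]^d` whose `i`-th factor is the dyadic interval
`[jj i / 2^{ℓ i}, (jj i + 1) / 2^{ℓ i})`. -/
def dyadicBox (d : ℕ) (ℓ jj : Fin d → ℕ) : Set (Fin d → ℝ) :=
  {x | ∀ i, (jj i : ℝ) / 2 ^ ℓ i ≤ x i ∧ x i < ((jj i : ℝ) + 1) / 2 ^ ℓ i}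

/-- The indicator function of the dyadic box with levels `ℓ` and positions `jj`. -/
noncomputable def chi (d : ℕ) (ℓ jj : Fin d → ℕ) (x : Fin d → ℝ) : ℝ :=
  Set.indicator (dyadicBox d ℓ jj) 1 x

/-- The embedding coordinate `Ψ_{k,r,R}` where `R` is the dyadic box with levels `ℓ` and
positions `jj`: for `k = 0` it is `χ_R`; for `k ≥ 1` it is
`2^{-k/2} ∏_{t=1}^{k} (χ_{R_{r_t}^+} - χ_{R_{r_t}^-})`, the halves being taken in
coordinate `r t`. -/
noncomputable def Psi (d k : ℕ) (r : Fin (k + 1) → Fin d) (ℓ jj : Fin d → ℕ)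
    (x : Fin d → ℝ) : ℝ :=
  if k = 0 then chi d ℓ jj x
  else (Real.sqrt 2)⁻¹ ^ k *
    ∏ t ∈ Finset.Ioi (0 : Fin (k + 1)),
      (chi d (Function.update ℓ (r t) (ℓ (r t) + 1))
          (Function.update jj (r t) (2 * jj (r t) + 1)) x
        - chi d (Function.update ℓ (r t) (ℓ (r t) + 1))
          (Function.update jj (r t) (2 * jj (r t))) x)

/-- The index set `𝒯` of admissible triples `(k, r, R)` at scale `m`. -/
def Triples (d m : ℕ) : Set ((k : ℕ) × (Fin (k + 1) → Fin d) × (Fin d → ℕ) × (Fin d → ℕ)) :=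
  {t | t.1 < d ∧ t.1 ≤ m ∧ StrictMono t.2.1 ∧ (t.2.1 0 : ℕ) = 0 ∧
    (∑ i, t.2.2.1 i) = m - t.1 ∧ (∀ i, t.2.2.2 i < 2 ^ t.2.2.1 i) ∧
    (∀ i, i ∉ Set.range t.2.1 → t.2.2.1 i = 0)}

namespace S15

def P (l a : ℕ) (t : ℝ) : Prop := (a : ℝ) / 2 ^ l ≤ t ∧ t < ((a : ℝ) + 1) / 2 ^ l
lemma mem_box_iff {d : ℕ} {ℓ jj : Fin d → ℕ} {y : Fin d → ℝ} :
    y ∈ dyadicBox d ℓ jj ↔ ∀ p, P (ℓ p) (jj p) (y p) := Iff.rfl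
lemma P_split {l a : ℕ} {t : ℝ} :
    (P (l + 1) (2 * a + 1) t ∨ P (l + 1) (2 * a) t) ↔ P l a t := by
  have h2 : (0:ℝ) < 2 ^ l := by positivity
  have h2' : (0:ℝ) < 2 ^ (l + 1) := by positivity
  unfold P
  rw [div_le_iff₀ h2, div_le_iff₀ h2', div_le_iff₀ h2', lt_div_iff₀ h2, lt_div_iff₀ h2',
    lt_div_iff₀ h2']
  have hp : (2:ℝ) ^ (l + 1) = 2 * 2 ^ l := by ring
  push_cast
  rw [hp]
  constructor
  · rintro (⟨ha, hb⟩ | ⟨ha, hb⟩) <;> constructor <;> nlinarith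
  · rintro ⟨ha, hb⟩
    rcases le_or_gt ((2 * a + 1 : ℝ)) (t * (2 * 2 ^ l)) with h | h
    · left; constructor <;> nlinarith
    · right; constructor <;> nlinarith
lemma P_not_both {l a : ℕ} {t : ℝ} : ¬ (P (l + 1) (2 * a + 1) t ∧ P (l + 1) (2 * a) t) := by
  rintro ⟨⟨h1, -⟩, ⟨-, h2⟩⟩
  have hc : ((2 * a : ℕ) : ℝ) + 1 = ((2 * a + 1 : ℕ) : ℝ) := by push_cast; ring
  rw [hc] at h2
  exact absurd (h2.trans_le h1) (lt_irrefl t)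

lemma box_split {d : ℕ} (ℓ jj : Fin d → ℕ) (i : Fin d) (y : Fin d → ℝ) :
    (y ∈ dyadicBox d (Function.update ℓ i (ℓ i + 1)) (Function.update jj i (2 * jj i + 1)) ∨
      y ∈ dyadicBox d (Function.update ℓ i (ℓ i + 1)) (Function.update jj i (2 * jj i)))
    ↔ y ∈ dyadicBox d ℓ jj := by
  simp only [mem_box_iff]
  constructor
  · rintro (h | h) <;> intro p
    · rcases eq_or_ne p i with rfl | hp
      · have hi := h p
        rw [Function.update_self, Function.update_self] at hi
        exact P_split.mp (Or.inl hi)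
      · have hi := h p
        rwa [Function.update_of_ne hp, Function.update_of_ne hp] at hi
    · rcases eq_or_ne p i with rfl | hp
      · have hi := h p
        rw [Function.update_self, Function.update_self] at hi
        exact P_split.mp (Or.inr hi)
      · have hi := h p
        rwa [Function.update_of_ne hp, Function.update_of_ne hp] at hi
  · intro h
    rcases (P_split (l := ℓ i) (a := jj i) (t := y i)).mpr (h i) with hi | hi
    · left
      intro p
      rcases eq_or_ne p i with rfl | hp
      · rwa [Function.update_self, Function.update_self]
      · rw [Function.update_of_ne hp, Function.update_of_ne hp]; exact h p
    · right
      intro p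
      rcases eq_or_ne p i with rfl | hp
      · rwa [Function.update_self, Function.update_self]
      · rw [Function.update_of_ne hp, Function.update_of_ne hp]; exact h p

lemma box_not_both {d : ℕ} (ℓ jj : Fin d → ℕ) (i : Fin d) (y : Fin d → ℝ) :
    ¬ (y ∈ dyadicBox d (Function.update ℓ i (ℓ i + 1)) (Function.update jj i (2 * jj i + 1)) ∧
      y ∈ dyadicBox d (Function.update ℓ i (ℓ i + 1)) (Function.update jj i (2 * jj i))) := by
  rintro ⟨h1, h2⟩
  have hA := h1 i
  have hB := h2 i
  rw [Function.update_self, Function.update_self] at hA hB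
  exact P_not_both ⟨hA, hB⟩

lemma psi_ne_zero_iff (d k : ℕ) (r : Fin (k + 1) → Fin d) (ℓ jj : Fin d → ℕ)
    (x : Fin d → ℝ) : Psi d k r ℓ jj x ≠ 0 ↔ x ∈ dyadicBox d ℓ jj := by
  have factor_iff : ∀ i : Fin d,
      ((chi d (Function.update ℓ i (ℓ i + 1)) (Function.update jj i (2 * jj i + 1)) x
        - chi d (Function.update ℓ i (ℓ i + 1)) (Function.update jj i (2 * jj i)) x) ≠ 0
        ↔ x ∈ dyadicBox d ℓ jj) := by
    intro i
    by_cases hA : x ∈ dyadicBox d (Function.update ℓ i (ℓ i + 1))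
        (Function.update jj i (2 * jj i + 1))
    · have hB : x ∉ dyadicBox d (Function.update ℓ i (ℓ i + 1))
          (Function.update jj i (2 * jj i)) := fun hB => box_not_both ℓ jj i x ⟨hA, hB⟩
      unfold chi
      rw [Set.indicator_of_mem hA, Set.indicator_of_notMem hB]
      simp only [Pi.one_apply, sub_zero, ne_eq, one_ne_zero, not_false_eq_true, true_iff]
      exact (box_split ℓ jj i x).mp (Or.inl hA)
    · by_cases hB : x ∈ dyadicBox d (Function.update ℓ i (ℓ i + 1))
          (Function.update jj i (2 * jj i))
      · unfold chi
        rw [Set.indicator_of_notMem hA, Set.indicator_of_mem hB]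
        simp only [Pi.one_apply, zero_sub, ne_eq, neg_eq_zero, one_ne_zero,
          not_false_eq_true, true_iff]
        exact (box_split ℓ jj i x).mp (Or.inr hB)
      · unfold chi
        rw [Set.indicator_of_notMem hA, Set.indicator_of_notMem hB]
        simp only [sub_zero, ne_eq, not_true_eq_false, false_iff, sub_self]
        intro hx
        rcases (box_split ℓ jj i x).mpr hx with h | h
        · exact hA h
        · exact hB h
  unfold Psi
  rcases eq_or_ne k 0 with rfl | hk
  · rw [if_pos rfl]
    unfold chi
    constructor
    · intro h
      by_contra hx
      exact h (Set.indicator_of_notMem hx 1)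
    · intro h
      rw [Set.indicator_of_mem h]
      simp
  · rw [if_neg hk]
    have hs : ((Real.sqrt 2)⁻¹ : ℝ) ^ k ≠ 0 := by positivity
    rw [mul_ne_zero_iff]
    constructor
    · rintro ⟨-, hprod⟩
      rw [Finset.prod_ne_zero_iff] at hprod
      have h0 : (0 : Fin (k + 1)) < ⟨1, by omega⟩ := by
        rw [Fin.lt_def, Fin.val_zero]
        norm_num
      have h1 : (⟨1, by omega⟩ : Fin (k + 1)) ∈ Finset.Ioi (0 : Fin (k + 1)) :=
        Finset.mem_Ioi.mpr h0
      exact (factor_iff _).mp (hprod _ h1)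
    · intro hx
      exact ⟨hs, Finset.prod_ne_zero_iff.mpr fun t _ => (factor_iff (r t)).mpr hx⟩

lemma mem_box_floor {d : ℕ} (ℓ : Fin d → ℕ) {x : Fin d → ℝ} (hx : ∀ i, 0 ≤ x i) :
    x ∈ dyadicBox d ℓ (fun i => ⌊x i * 2 ^ ℓ i⌋₊) := by
  intro i
  have hpos : (0:ℝ) < 2 ^ ℓ i := by positivity
  have hnn : 0 ≤ x i * 2 ^ ℓ i := mul_nonneg (hx i) (by positivity)
  constructor
  · rw [div_le_iff₀ hpos]
    exact Nat.floor_le hnn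
  · rw [lt_div_iff₀ hpos]
    exact Nat.lt_floor_add_one _

lemma floor_lt_pow {l : ℕ} {t : ℝ} (h0 : 0 ≤ t) (h1 : t < 1) : ⌊t * 2 ^ l⌋₊ < 2 ^ l := by
  rw [Nat.floor_lt (mul_nonneg h0 (by positivity))]
  push_cast
  nlinarith [pow_pos (show (0:ℝ) < 2 by norm_num) l]

lemma box_unique {d : ℕ} {ℓ jj : Fin d → ℕ} {x : Fin d → ℝ} (hx : ∀ i, 0 ≤ x i)
    (h : x ∈ dyadicBox d ℓ jj) : jj = fun i => ⌊x i * 2 ^ ℓ i⌋₊ := by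
  funext i
  have hpos : (0:ℝ) < 2 ^ ℓ i := by positivity
  obtain ⟨h1, h2⟩ := h i
  rw [div_le_iff₀ hpos] at h1
  rw [lt_div_iff₀ hpos] at h2
  symm
  rw [Nat.floor_eq_iff (mul_nonneg (hx i) (by positivity))]
  exact ⟨h1, h2⟩



lemma sum_support {d K : ℕ} {r : Fin K → Fin d} (hr : Function.Injective r) (g : Fin d → ℕ)
    (hg : ∀ i, i ∉ Set.range r → g i = 0) : ∑ i, g i = ∑ t, g (r t) := by
  rw [← Finset.sum_image (g := r) (f := g) (fun a _ b _ h => hr h)]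
  refine (Finset.sum_subset (Finset.subset_univ _) ?_).symm
  intro i _ hi
  refine hg i ?_
  rintro ⟨t, rfl⟩
  exact hi (Finset.mem_image_of_mem r (Finset.mem_univ t))

lemma card_strictMono (α : Type*) [Fintype α] [LinearOrder α] (n : ℕ) :
    Nat.card {f : Fin n → α // StrictMono f} = (Fintype.card α).choose n := by
  classical
  have e : {f : Fin n → α // StrictMono f} ≃ {s : Finset α // s.card = n} :=
    { toFun := fun f => ⟨Finset.univ.image f.1,
        by rw [Finset.card_image_of_injective _ f.2.injective, Finset.card_univ,
          Fintype.card_fin]⟩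
      invFun := fun s => ⟨⇑(s.1.orderEmbOfFin s.2), (s.1.orderEmbOfFin s.2).strictMono⟩
      left_inv := fun f => Subtype.ext
        (Finset.orderEmbOfFin_unique _
          (fun i => Finset.mem_image_of_mem _ (Finset.mem_univ i)) f.2).symm
      right_inv := fun s => Subtype.ext (by
        ext a
        simp only [Finset.mem_image, Finset.mem_univ, true_and]
        constructor
        · rintro ⟨i, rfl⟩
          exact Finset.orderEmbOfFin_mem s.1 s.2 i
        · intro ha
          have h2 : a ∈ Set.range (s.1.orderEmbOfFin s.2) := by
            rw [Finset.range_orderEmbOfFin]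
            exact ha
          exact h2) }
  rw [Nat.card_congr e, Nat.card_eq_fintype_card, Fintype.card_finset_len]

lemma card_sum_eq (K n : ℕ) :
    Nat.card {f : Fin K → ℕ // ∑ i, f i = n} = (K + n - 1).choose n := by
  classical
  rw [Nat.card_congr (Sym.equivNatSumOfFintype (Fin K) n).symm, Nat.card_eq_fintype_card,
    Sym.card_sym_eq_multichoose, Fintype.card_fin, Nat.multichoose_eq]


def rback {d : ℕ} (hd : 0 < d) {k : ℕ} (f : Fin k → {i : Fin d // (i : ℕ) ≠ 0})
    (j : Fin (k + 1)) : Fin d :=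
  if h : (j : ℕ) = 0 then ⟨0, hd⟩ else (f ⟨(j : ℕ) - 1, by omega⟩).1

lemma rback_zero {d : ℕ} (hd : 0 < d) {k : ℕ} (f : Fin k → {i : Fin d // (i : ℕ) ≠ 0}) :
    rback hd f 0 = ⟨0, hd⟩ := by
  unfold rback
  rw [dif_pos (Fin.val_zero _)]

lemma rback_succ {d : ℕ} (hd : 0 < d) {k : ℕ} (f : Fin k → {i : Fin d // (i : ℕ) ≠ 0})
    (t : Fin k) : rback hd f t.succ = (f t).1 := by
  unfold rback
  rw [dif_neg (by simp [Fin.val_succ])]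
  exact congrArg (fun s => (f s).1) (Fin.ext (by simp [Fin.val_succ]))

lemma rback_strictMono {d : ℕ} (hd : 0 < d) {k : ℕ}
    (f : Fin k → {i : Fin d // (i : ℕ) ≠ 0}) (hf : StrictMono f) :
    StrictMono (rback hd f) := by
  intro a b hab
  have hab' : (a : ℕ) < b := hab
  unfold rback
  by_cases ha : (a : ℕ) = 0
  · rw [dif_pos ha, dif_neg (by omega)]
    have hne := (f ⟨(b : ℕ) - 1, by omega⟩).2
    rw [Fin.lt_def]
    exact Nat.pos_of_ne_zero hne
  · rw [dif_neg ha, dif_neg (by omega)]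
    have hlt : (⟨(a : ℕ) - 1, by omega⟩ : Fin k) < ⟨(b : ℕ) - 1, by omega⟩ := by
      rw [Fin.mk_lt_mk]; omega
    exact Subtype.coe_lt_coe.mpr (hf hlt)

def rfwd {d k : ℕ} (r : Fin (k + 1) → Fin d) (hmono : StrictMono r) (h0 : (r 0 : ℕ) = 0) :
    Fin k → {i : Fin d // (i : ℕ) ≠ 0} := fun t => ⟨r t.succ, by
  have hlt : r 0 < r t.succ := hmono t.succ_pos
  rw [Fin.lt_def, h0] at hlt
  omega⟩

lemma rback_rfwd {d k : ℕ} (hd : 0 < d) (r : Fin (k + 1) → Fin d) (hmono : StrictMono r)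
    (h0 : (r 0 : ℕ) = 0) : rback hd (rfwd r hmono h0) = r := by
  funext j
  induction j using Fin.cases with
  | zero =>
    rw [rback_zero]
    exact Fin.ext h0.symm
  | succ t => exact rback_succ hd _ t

lemma rfwd_rback {d k : ℕ} (hd : 0 < d) (f : Fin k → {i : Fin d // (i : ℕ) ≠ 0})
    (hmono : StrictMono (rback hd f)) (h0 : ((rback hd f) 0 : ℕ) = 0) :
    rfwd (rback hd f) hmono h0 = f := by
  funext t
  exact Subtype.ext (rback_succ hd f t)

lemma card_R {d : ℕ} (hd : 0 < d) (k : ℕ) :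
    Nat.card {r : Fin (k + 1) → Fin d // StrictMono r ∧ (r 0 : ℕ) = 0} = (d - 1).choose k := by
  classical
  have h1 : Fintype.card {i : Fin d // (i : ℕ) = 0} = 1 := by
    rw [Fintype.card_eq_one_iff]
    refine ⟨⟨⟨0, hd⟩, rfl⟩, ?_⟩
    rintro ⟨i, hi⟩
    exact Subtype.ext (Fin.ext hi)
  have hcard : Fintype.card {i : Fin d // (i : ℕ) ≠ 0} = d - 1 := by
    rw [Fintype.card_subtype_compl, h1, Fintype.card_fin]
  have e : {r : Fin (k + 1) → Fin d // StrictMono r ∧ (r 0 : ℕ) = 0}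
      ≃ {f : Fin k → {i : Fin d // (i : ℕ) ≠ 0} // StrictMono f} :=
    { toFun := fun r => ⟨rfwd r.1 r.2.1 r.2.2,
        fun a b hab => Subtype.mk_lt_mk.mpr (r.2.1 (Fin.succ_lt_succ_iff.mpr hab))⟩
      invFun := fun f => ⟨rback hd f.1, rback_strictMono hd f.1 f.2, by rw [rback_zero]⟩
      left_inv := fun r => Subtype.ext (rback_rfwd hd r.1 r.2.1 r.2.2)
      right_inv := fun f => Subtype.ext (rfwd_rback hd f.1 (rback_strictMono hd f.1 f.2) (by rw [rback_zero])) }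
  rw [Nat.card_congr e, card_strictMono, hcard]

lemma extend_comp {d K : ℕ} {r : Fin K → Fin d} (hr : Function.Injective r) (ℓ : Fin d → ℕ)
    (hsupp : ∀ i, i ∉ Set.range r → ℓ i = 0) :
    Function.extend r (fun t => ℓ (r t)) (0 : Fin d → ℕ) = ℓ := by
  funext i
  by_cases h : ∃ t, r t = i
  · obtain ⟨t, rfl⟩ := h
    exact hr.extend_apply _ (0 : Fin d → ℕ) t
  · rw [Function.extend_apply' _ (0 : Fin d → ℕ) i h]
    exact (hsupp i h).symm

lemma comp_extend {d K : ℕ} {r : Fin K → Fin d} (hr : Function.Injective r) (f : Fin K → ℕ) :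
    (fun t => Function.extend r f (0 : Fin d → ℕ) (r t)) = f :=
  funext fun t => hr.extend_apply f (0 : Fin d → ℕ) t

noncomputable def eL {d K : ℕ} {r : Fin K → Fin d} (hr : Function.Injective r) (n : ℕ) :
    {ℓ : Fin d → ℕ // (∑ i, ℓ i) = n ∧ ∀ i, i ∉ Set.range r → ℓ i = 0}
      ≃ {f : Fin K → ℕ // ∑ t, f t = n} :=
  { toFun := fun ℓ => ⟨fun t => ℓ.1 (r t), by
      rw [← sum_support hr ℓ.1 ℓ.2.2]; exact ℓ.2.1⟩
    invFun := fun f => ⟨Function.extend r f.1 (0 : Fin d → ℕ), by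
      refine ⟨?_, fun i hi => Function.extend_apply' f.1 (0 : Fin d → ℕ) i (by simpa using hi)⟩
      rw [sum_support hr _ (fun i hi => Function.extend_apply' f.1 (0 : Fin d → ℕ) i (by simpa using hi))]
      calc ∑ t, Function.extend r f.1 (0 : Fin d → ℕ) (r t) = ∑ t, f.1 t := by
            refine Finset.sum_congr rfl fun t _ => ?_
            exact hr.extend_apply f.1 (0 : Fin d → ℕ) t
        _ = n := f.2⟩
    left_inv := fun ℓ => Subtype.ext (extend_comp hr ℓ.1 ℓ.2.2)
    right_inv := fun f => Subtype.ext (comp_extend hr f.1) }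


lemma nat_card_sigma {ι : Type*} [Fintype ι] (f : ι → Type*) [∀ i, Finite (f i)] :
    Nat.card (Σ i, f i) = ∑ i, Nat.card (f i) := by
  letI := fun i => Fintype.ofFinite (f i)
  simp [Nat.card_eq_fintype_card]

end S15

open S15 in
/-- For every `x ∈ [0,1)^d`, the number of nonzero coordinates of the embedding vector
`Ψ(x)` is exactly `∑_{k=0}^{d-1} C(m,k) C(d-1,k)`. -/
theorem stmt15 (d m : ℕ) (hd : 1 ≤ d) (hm : d - 1 ≤ m)
    (x : Fin d → ℝ) (hx : ∀ i, 0 ≤ x i ∧ x i < 1) :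
    Nat.card {t : Triples d m // Psi d t.val.1 t.val.2.1 t.val.2.2.1 t.val.2.2.2 x ≠ 0}
      = ∑ k ∈ Finset.range d, m.choose k * (d - 1).choose k := by
  classical
  have hd0 : 0 < d := hd
  have hx0 : ∀ i, 0 ≤ x i := fun i => (hx i).1
  have E : {t : Triples d m // Psi d t.val.1 t.val.2.1 t.val.2.2.1 t.val.2.2.2 x ≠ 0}
      ≃ Σ k : Fin d, ({r : Fin (k.1 + 1) → Fin d // StrictMono r ∧ (r 0 : ℕ) = 0} ×
        {f : Fin (k.1 + 1) → ℕ // ∑ i, f i = m - k.1}) :=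
    { toFun := fun t =>
        ⟨⟨t.1.1.1, t.1.2.1⟩,
         ⟨t.1.1.2.1, t.1.2.2.2.1, t.1.2.2.2.2.1⟩,
         ⟨fun s => t.1.1.2.2.1 (t.1.1.2.1 s), by
            have hT := t.1.2
            rw [← sum_support hT.2.2.1.injective _ hT.2.2.2.2.2.2]
            exact hT.2.2.2.2.1⟩⟩
      invFun := fun p =>
        ⟨⟨⟨p.1.1, p.2.1.1, Function.extend p.2.1.1 p.2.2.1 (0 : Fin d → ℕ),
            fun i => ⌊x i * 2 ^ (Function.extend p.2.1.1 p.2.2.1 (0 : Fin d → ℕ) i)⌋₊⟩, by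
          have hinj := p.2.1.2.1.injective
          refine ⟨p.1.2, ?_, p.2.1.2.1, p.2.1.2.2, ?_, ?_, ?_⟩
          · show p.1.1 ≤ m
            have := p.1.2
            omega
          · calc ∑ i, Function.extend p.2.1.1 p.2.2.1 (0 : Fin d → ℕ) i
                = ∑ t, Function.extend p.2.1.1 p.2.2.1 (0 : Fin d → ℕ) (p.2.1.1 t) :=
                  sum_support hinj _ (fun i hi =>
                    Function.extend_apply' p.2.2.1 (0 : Fin d → ℕ) i (by simpa using hi))
              _ = ∑ t, p.2.2.1 t := Finset.sum_congr rfl fun t _ =>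
                  hinj.extend_apply p.2.2.1 (0 : Fin d → ℕ) t
              _ = m - p.1.1 := p.2.2.2
          · intro i
            exact floor_lt_pow (hx i).1 (hx i).2
          · intro i hi
            exact Function.extend_apply' p.2.2.1 (0 : Fin d → ℕ) i (by simpa using hi)⟩, by
          exact (psi_ne_zero_iff d p.1.1 p.2.1.1 _ _ x).mpr (mem_box_floor _ hx0)⟩
      left_inv := by
        rintro ⟨⟨⟨k, r, ℓ, jj⟩, hT⟩, hP⟩
        have hbox : x ∈ dyadicBox d ℓ jj := (psi_ne_zero_iff d k r ℓ jj x).mp hP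
        have hjj : jj = fun i => ⌊x i * 2 ^ ℓ i⌋₊ := box_unique hx0 hbox
        have hℓ : Function.extend r (fun s => ℓ (r s)) (0 : Fin d → ℕ) = ℓ :=
          extend_comp hT.2.2.1.injective ℓ hT.2.2.2.2.2.2
        refine Subtype.ext (Subtype.ext ?_)
        show (⟨k, r, Function.extend r (fun s => ℓ (r s)) (0 : Fin d → ℕ),
            fun i => ⌊x i * 2 ^ (Function.extend r (fun s => ℓ (r s)) (0 : Fin d → ℕ) i)⌋₊⟩ :
            (k : ℕ) × (Fin (k + 1) → Fin d) × (Fin d → ℕ) × (Fin d → ℕ))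
          = ⟨k, r, ℓ, jj⟩
        rw [hℓ, hjj]
      right_inv := by
        rintro ⟨⟨k, hk⟩, ⟨r, hr⟩, ⟨f, hf⟩⟩
        have hinj := hr.1.injective
        refine Sigma.ext rfl (heq_of_eq ?_)
        refine Prod.ext ?_ ?_
        · exact Subtype.ext rfl
        · exact Subtype.ext (comp_extend hinj f) }
  rw [Nat.card_congr E]
  haveI hFin : ∀ k : Fin d, Finite
      ({r : Fin (k.1 + 1) → Fin d // StrictMono r ∧ (r 0 : ℕ) = 0} ×
        {f : Fin (k.1 + 1) → ℕ // ∑ i, f i = m - k.1}) := by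
    intro k
    haveI h2 : Finite {f : Fin (k.1 + 1) → ℕ // ∑ i, f i = m - k.1} :=
      Finite.of_equiv _ (Sym.equivNatSumOfFintype (Fin (k.1 + 1)) (m - k.1))
    infer_instance
  rw [nat_card_sigma]
  rw [Fin.sum_univ_eq_sum_range (fun k =>
    Nat.card ({r : Fin (k + 1) → Fin d // StrictMono r ∧ (r 0 : ℕ) = 0} ×
      {f : Fin (k + 1) → ℕ // ∑ i, f i = m - k})) d]
  refine Finset.sum_congr rfl fun k hk => ?_
  have hkd : k < d := Finset.mem_range.mp hk
  have hkm : k ≤ m := by omega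
  rw [Nat.card_prod, card_R hd0 k, card_sum_eq (k + 1) (m - k)]
  have h1 : k + 1 + (m - k) - 1 = m := by omega
  rw [h1, Nat.choose_symm hkm, Nat.mul_comm]
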